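/- For every real x, the error function admits the series representation erf(x) = x/√π + (x/√π)·[1 + x²/3]·e^{−x²} + (x⁵/(6√π))·Σ_{k=0}^∞ (−1)^k (2k+1)·(k+1)!·x^{2k} / [(2k+5)·∏_{r=1}^k (Σ_{i=1}^r (2i+1))], where the empty product (k = 0) equals 1, and the series converges for all x. -/

import Mathlib

open Real intervalIntegral


lemma erf_inner_sum (r : ℕ) : (∑ i ∈ Finset.Icc 1 r, (2 * (i : ℝ) + 1)) = r * (r + 2) := by
  induction r with
  | zero => simp
  | succ n ih =>
    rw [Finset.sum_Icc_succ_top (by omega), ih]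
    push_cast; ring

lemma erf_prod_eq (k : ℕ) :
    (∏ r ∈ Finset.Icc 1 k, (∑ i ∈ Finset.Icc 1 r, (2 * (i : ℝ) + 1)))
      = (Nat.factorial k : ℝ) * (Nat.factorial (k + 2)) / 2 := by
  induction k with
  | zero => simp [Nat.factorial]
  | succ n ih =>
    rw [Finset.prod_Icc_succ_top (by omega), ih, erf_inner_sum]
    have h1 : ((n + 1).factorial : ℝ) = (n + 1) * n.factorial := by
      exact_mod_cast Nat.factorial_succ n
    have h2 : ((n + 1 + 2).factorial : ℝ) = (n + 3) * (n + 2).factorial := by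
      have h : n + 1 + 2 = (n + 2) + 1 := by omega
      rw [h]
      push_cast [Nat.factorial_succ (n + 2)]; ring
    rw [h1, h2]
    push_cast; ring

lemma erf_term_eq (x : ℝ) (k : ℕ) :
    (-1 : ℝ) ^ k * (2 * (k : ℝ) + 1) * (Nat.factorial (k + 1) : ℝ) * x ^ (2 * k) /
        ((2 * (k : ℝ) + 5) *
          ∏ r ∈ Finset.Icc 1 k, (∑ i ∈ Finset.Icc 1 r, (2 * (i : ℝ) + 1)))
      = 2 * (-1) ^ k * (2 * (k : ℝ) + 1) * ((k : ℝ) + 1) * x ^ (2 * k) /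
        ((2 * (k : ℝ) + 5) * (Nat.factorial (k + 2) : ℝ)) := by
  have hfac : ((k + 1).factorial : ℝ) = ((k : ℝ) + 1) * k.factorial := by
    push_cast [Nat.factorial_succ]; ring
  have hk : (k.factorial : ℝ) ≠ 0 := by positivity
  have hk2 : ((k + 2).factorial : ℝ) ≠ 0 := by positivity
  have h5 : (2 * (k : ℝ) + 5) ≠ 0 := by positivity
  rw [erf_prod_eq, hfac]
  field_simp

lemma erf_hasDerivAt_F (t : ℝ) :
    HasDerivAt (fun y : ℝ => ∑' n : ℕ,
        (-1 : ℝ) ^ n * y ^ (2 * n + 1) / ((2 * (n : ℝ) + 1) * n.factorial))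
      (Real.exp (-t ^ 2)) t := by
  set R : ℝ := |t| + 1 with hR
  have hRpos : 0 < R := by positivity
  have htmem : t ∈ Metric.ball (0 : ℝ) R := by
    simp [Real.dist_eq, hR]
  have h0mem : (0 : ℝ) ∈ Metric.ball (0 : ℝ) R := by
    simp [hRpos]
  have hu : Summable (fun n : ℕ => (R ^ 2) ^ n / n.factorial) :=
    Real.summable_pow_div_factorial (R ^ 2)
  have key : HasDerivAt (fun y : ℝ => ∑' n : ℕ,
        (-1 : ℝ) ^ n * y ^ (2 * n + 1) / ((2 * (n : ℝ) + 1) * n.factorial))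
      (∑' n : ℕ, (-1 : ℝ) ^ n * t ^ (2 * n) / n.factorial) t := by
    apply hasDerivAt_tsum_of_isPreconnected hu Metric.isOpen_ball
      (convex_ball (0:ℝ) R).isPreconnected
      (g := fun (n : ℕ) (y : ℝ) => (-1 : ℝ) ^ n * y ^ (2 * n + 1) / ((2 * (n : ℝ) + 1) * n.factorial))
      (g' := fun (n : ℕ) (y : ℝ) => (-1 : ℝ) ^ n * y ^ (2 * n) / n.factorial)
      ?_ ?_ h0mem ?_ htmem
    · intro n y _
      have hfun : (fun y : ℝ => (-1 : ℝ) ^ n * y ^ (2 * n + 1) / ((2 * (n : ℝ) + 1) * n.factorial))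
          = fun y : ℝ => ((-1 : ℝ) ^ n / ((2 * (n : ℝ) + 1) * n.factorial)) * y ^ (2 * n + 1) := by
        funext z; ring
      show HasDerivAt (fun y : ℝ => (-1 : ℝ) ^ n * y ^ (2 * n + 1) / ((2 * (n : ℝ) + 1) * n.factorial))
        ((-1 : ℝ) ^ n * y ^ (2 * n) / n.factorial) y
      rw [hfun]
      have h := (hasDerivAt_pow (2 * n + 1) y).const_mul
        ((-1 : ℝ) ^ n / ((2 * (n : ℝ) + 1) * n.factorial))
      refine h.congr_deriv ?_
      have hfn : ((n.factorial : ℝ)) ≠ 0 := by positivity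
      have h1 : (2 * (n : ℝ) + 1) ≠ 0 := by positivity
      have hcast : ((2 * n + 1 : ℕ) : ℝ) = 2 * (n : ℝ) + 1 := by push_cast; ring
      rw [Nat.add_sub_cancel, hcast]
      field_simp
    · intro n y hy
      have hyR : |y| ≤ R := by
        have := mem_ball_zero_iff.mp hy
        simpa using this.le
      have h1 : ‖(-1 : ℝ) ^ n * y ^ (2 * n) / n.factorial‖
          = |y| ^ (2 * n) / n.factorial := by
        rw [norm_div, norm_mul, norm_pow, norm_pow]
        simp [abs_of_nonneg (Nat.cast_nonneg n.factorial : (0:ℝ) ≤ n.factorial)]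
      rw [h1]
      have h2 : |y| ^ (2 * n) ≤ (R ^ 2) ^ n := by
        rw [pow_mul]
        exact pow_le_pow_left₀ (by positivity) (pow_le_pow_left₀ (abs_nonneg y) hyR 2) n
      exact div_le_div_of_nonneg_right h2 <| by positivity
    · apply Summable.congr summable_zero
      intro n
      simp
  have hsum : (∑' n : ℕ, (-1 : ℝ) ^ n * t ^ (2 * n) / n.factorial) = Real.exp (-t ^ 2) := by
    rw [Real.exp_eq_exp_ℝ, NormedSpace.exp_eq_tsum_div]
    congr 1
    funext n
    have hpow : (-t ^ 2) ^ n = (-1 : ℝ) ^ n * t ^ (2 * n) := by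
      rw [neg_pow, ← pow_mul]
    rw [hpow]
  rwa [hsum] at key

lemma erf_integral_series (x : ℝ) :
    (∫ t in (0:ℝ)..x, Real.exp (-t ^ 2)) =
      ∑' n : ℕ, (-1 : ℝ) ^ n * x ^ (2 * n + 1) / ((2 * (n : ℝ) + 1) * n.factorial) := by
  have h := intervalIntegral.integral_eq_sub_of_hasDerivAt
    (f := fun y : ℝ => ∑' n : ℕ,
        (-1 : ℝ) ^ n * y ^ (2 * n + 1) / ((2 * (n : ℝ) + 1) * n.factorial))
    (f' := fun t : ℝ => Real.exp (-t ^ 2))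
    (fun t _ => erf_hasDerivAt_F t)
    ((Real.continuous_exp.comp (by continuity)).intervalIntegrable 0 x)
  rw [h]
  beta_reduce
  have h0 : (∑' n : ℕ, (-1 : ℝ) ^ n * (0:ℝ) ^ (2 * n + 1) / ((2 * (n : ℝ) + 1) * n.factorial)) = 0 := by
    rw [tsum_congr (fun n => by simp : ∀ n : ℕ,
      (-1 : ℝ) ^ n * (0:ℝ) ^ (2 * n + 1) / ((2 * (n : ℝ) + 1) * n.factorial) = 0)]
    exact tsum_zero
  rw [h0, sub_zero]
lemma erf_summable_F (x : ℝ) :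
    Summable (fun n : ℕ => (-1 : ℝ) ^ n * x ^ (2 * n + 1) / ((2 * (n : ℝ) + 1) * n.factorial)) := by
  apply Summable.of_norm
  apply Summable.of_nonneg_of_le (fun n => norm_nonneg _)
    (f := fun n : ℕ => |x| * (x ^ 2) ^ n / n.factorial)
  · intro n
    have hfn : (0:ℝ) < (n.factorial : ℝ) := by
      exact_mod_cast n.factorial_pos
    have h1 : ‖(-1 : ℝ) ^ n * x ^ (2 * n + 1) / ((2 * (n : ℝ) + 1) * n.factorial)‖
        = |x| ^ (2 * n + 1) / ((2 * (n : ℝ) + 1) * n.factorial) := by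
      rw [norm_div, norm_mul, norm_pow, norm_pow, ← abs_pow]
      simp [abs_of_nonneg (by positivity : (0:ℝ) ≤ (2 * (n : ℝ) + 1) * n.factorial), abs_pow]
      rw [abs_of_nonneg (by positivity : (0:ℝ) ≤ 2 * (n : ℝ) + 1)]
    have h2 : |x| ^ (2 * n + 1) = |x| * (x ^ 2) ^ n := by
      rw [pow_succ', pow_mul, sq_abs]
    rw [h1, h2]
    gcongr
    nlinarith [hfn.le, (Nat.cast_nonneg n : (0:ℝ) ≤ n)]
  · exact ((Real.summable_pow_div_factorial (x ^ 2)).mul_left |x|).congr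
      (fun n => by ring)

lemma erf_summable_g (x : ℝ) :
    Summable (fun n : ℕ => (-1 : ℝ) ^ n * x ^ (2 * n) / (n.factorial : ℝ)) := by
  apply Summable.of_norm
  have := (Real.summable_pow_div_factorial (x ^ 2)).abs
  apply this.congr
  intro n
  simp [abs_of_nonneg (Nat.cast_nonneg n.factorial : (0:ℝ) ≤ n.factorial), abs_pow,
    ← pow_mul, abs_div, abs_pow]

lemma erf_summable_c (x : ℝ) :
    Summable (fun n : ℕ => 2 * (-1 : ℝ) ^ n * (2 * (n : ℝ) + 1) * ((n : ℝ) + 1) * x ^ (2 * n) /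
      ((2 * (n : ℝ) + 5) * ((n + 2).factorial : ℝ))) := by
  apply Summable.of_norm
  apply Summable.of_nonneg_of_le (fun n => norm_nonneg _)
    (f := fun n : ℕ => 2 * (x ^ 2) ^ n / n.factorial)
  · intro n
    have hfn : (0:ℝ) < (n.factorial : ℝ) := by exact_mod_cast n.factorial_pos
    have hfe : ((n + 2).factorial : ℝ) = ((n:ℝ) + 2) * (((n:ℝ) + 1) * n.factorial) := by
      have h : (n + 2).factorial = (n + 2) * ((n + 1) * n.factorial) := by
        rw [Nat.factorial_succ, Nat.factorial_succ]
      rw [h]; push_cast; ring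
    have hfn2 : (0:ℝ) < ((n + 2).factorial : ℝ) := by
      rw [hfe]; positivity
    have hp : (0:ℝ) ≤ (x ^ 2) ^ n := by positivity
    have h1 : ‖2 * (-1 : ℝ) ^ n * (2 * (n : ℝ) + 1) * ((n : ℝ) + 1) * x ^ (2 * n) /
        ((2 * (n : ℝ) + 5) * ((n + 2).factorial : ℝ))‖
        = 2 * (2 * (n : ℝ) + 1) * ((n : ℝ) + 1) * (x ^ 2) ^ n /
          ((2 * (n : ℝ) + 5) * ((n + 2).factorial : ℝ)) := by
      rw [Real.norm_eq_abs, abs_div,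
        abs_of_nonneg (by positivity : (0:ℝ) ≤ (2 * (n : ℝ) + 5) * ((n + 2).factorial : ℝ))]
      congr 1
      rw [abs_mul, abs_mul, abs_mul, abs_mul,
        abs_of_nonneg (by positivity : (0:ℝ) ≤ (2 * (n : ℝ) + 1)),
        abs_of_nonneg (by positivity : (0:ℝ) ≤ ((n : ℝ) + 1))]
      simp [abs_pow, ← pow_mul, sq_abs, mul_comm n 2]
      exact Or.inl (by rw [pow_mul, pow_mul, sq_abs])
    have hr : 2 * (2 * (n:ℝ) + 1) * ((n:ℝ) + 1) * n.factorial
        ≤ 2 * ((2 * (n:ℝ) + 5) * (((n:ℝ) + 2) * (((n:ℝ) + 1) * n.factorial))) := by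
      nlinarith [hfn.le, (Nat.cast_nonneg n : (0:ℝ) ≤ n),
        mul_nonneg (Nat.cast_nonneg n : (0:ℝ) ≤ n) hfn.le,
        mul_nonneg (mul_nonneg (Nat.cast_nonneg n : (0:ℝ) ≤ n) (Nat.cast_nonneg n : (0:ℝ) ≤ n)) hfn.le]
    rw [h1, hfe, div_le_div_iff₀ (by positivity) (by positivity)]
    calc 2 * (2 * (n:ℝ) + 1) * ((n:ℝ) + 1) * (x ^ 2) ^ n * (n.factorial : ℝ)
        = (x ^ 2) ^ n * (2 * (2 * (n:ℝ) + 1) * ((n:ℝ) + 1) * n.factorial) := by ring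
      _ ≤ (x ^ 2) ^ n * (2 * ((2 * (n:ℝ) + 5) * (((n:ℝ) + 2) * (((n:ℝ) + 1) * n.factorial)))) :=
          mul_le_mul_of_nonneg_left hr hp
      _ = 2 * (x ^ 2) ^ n * ((2 * (n:ℝ) + 5) * (((n:ℝ) + 2) * (((n:ℝ) + 1) * n.factorial))) := by
          ring
  · exact ((Real.summable_pow_div_factorial (x ^ 2)).mul_left 2).congr
      (fun n => by ring)
lemma erf_key (x : ℝ) :
    2 * (∑' n : ℕ, (-1 : ℝ) ^ n * x ^ (2 * n + 1) / ((2 * (n : ℝ) + 1) * n.factorial))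
      = x + x * (1 + x ^ 2 / 3) * Real.exp (-x ^ 2) +
        x ^ 5 / 6 * ∑' n : ℕ, 2 * (-1 : ℝ) ^ n * (2 * (n : ℝ) + 1) * ((n : ℝ) + 1) * x ^ (2 * n) /
          ((2 * (n : ℝ) + 5) * ((n + 2).factorial : ℝ)) := by
  set F : ℕ → ℝ := fun n : ℕ => (-1 : ℝ) ^ n * x ^ (2 * n + 1) / ((2 * (n : ℝ) + 1) * n.factorial)
    with hFdef
  set g : ℕ → ℝ := fun n : ℕ => (-1 : ℝ) ^ n * x ^ (2 * n) / (n.factorial : ℝ) with hgdef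
  set c : ℕ → ℝ := fun n : ℕ => 2 * (-1 : ℝ) ^ n * (2 * (n : ℝ) + 1) * ((n : ℝ) + 1) * x ^ (2 * n) /
    ((2 * (n : ℝ) + 5) * ((n + 2).factorial : ℝ)) with hcdef
  set D1 : ℕ → ℝ := fun n : ℕ =>
    (-1 : ℝ) ^ n * (2 * (n : ℝ) + 1) * x ^ (2 * n + 3) / ((2 * (n : ℝ) + 3) * ((n + 1).factorial : ℝ))
    with hD1def
  have hF : Summable F := erf_summable_F x
  have hg : Summable g := erf_summable_g x
  have hc : Summable c := erf_summable_c x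
  have hexp : Real.exp (-x ^ 2) = ∑' n : ℕ, g n := by
    rw [Real.exp_eq_exp_ℝ, NormedSpace.exp_eq_tsum_div]
    exact (tsum_congr fun n => by
      rw [hgdef]
      have hpow : (-x ^ 2) ^ n = (-1 : ℝ) ^ n * x ^ (2 * n) := by
        rw [neg_pow, ← pow_mul]
      rw [hpow]).symm
  have hfacne : ∀ m : ℕ, ((m.factorial : ℝ)) ≠ 0 := fun m => by
    exact_mod_cast m.factorial_pos.ne'
  have hD : ∀ n : ℕ, 2 * F (n + 1) - x * g (n + 1) = D1 n := by
    intro n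
    have h1 : ((n + 1).factorial : ℝ) ≠ 0 := hfacne _
    rw [hFdef, hgdef, hD1def]
    simp only
    push_cast
    field_simp
    ring
  have hE0 : D1 0 - x ^ 3 / 3 * g 0 = 0 := by
    rw [hD1def, hgdef]
    norm_num [Nat.factorial]
  have hEsucc : ∀ n : ℕ, D1 (n + 1) - x ^ 3 / 3 * g (n + 1) = x ^ 5 / 6 * c n := by
    intro n
    have h1 : ((n + 1).factorial : ℝ) ≠ 0 := hfacne _
    have h2 : ((n + 2).factorial : ℝ) ≠ 0 := hfacne _
    have hfe : ((n + 2).factorial : ℝ) = ((n : ℝ) + 2) * ((n + 1).factorial : ℝ) := by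
      push_cast [Nat.factorial_succ (n + 1)]; ring
    have h3 : (2 * (n : ℝ) + 5) ≠ 0 := by positivity
    have h4 : (2 * ((n : ℝ) + 1) + 3) ≠ 0 := by positivity
    rw [hD1def, hgdef, hcdef]
    simp only
    push_cast
    rw [hfe]
    field_simp
    ring
  have hsD : Summable (fun n => 2 * F n - x * g n) := (hF.mul_left 2).sub (hg.mul_left x)
  have hsD1 : Summable D1 :=
    (((summable_nat_add_iff 1).mpr hsD).congr hD :)
  have hsE : Summable (fun n => D1 n - x ^ 3 / 3 * g n) := hsD1.sub (hg.mul_left (x ^ 3 / 3))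
  have e1 : (∑' n : ℕ, (2 * F n - x * g n)) = 2 * (∑' n, F n) - x * (∑' n, g n) := by
    rw [Summable.tsum_sub (hF.mul_left 2) (hg.mul_left x), tsum_mul_left, tsum_mul_left]
  have e2 : (∑' n : ℕ, (2 * F n - x * g n))
      = (2 * F 0 - x * g 0) + ∑' n : ℕ, (2 * F (n + 1) - x * g (n + 1)) :=
    Summable.tsum_eq_zero_add hsD
  have e3 : (∑' n : ℕ, (2 * F (n + 1) - x * g (n + 1))) = ∑' n : ℕ, D1 n := tsum_congr hD
  have h20 : 2 * F 0 - x * g 0 = x := by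
    rw [hFdef, hgdef]
    norm_num [Nat.factorial]
    ring
  have e4 : (∑' n : ℕ, (D1 n - x ^ 3 / 3 * g n))
      = (∑' n, D1 n) - x ^ 3 / 3 * (∑' n, g n) := by
    rw [Summable.tsum_sub hsD1 (hg.mul_left (x ^ 3 / 3)), tsum_mul_left]
  have e5 : (∑' n : ℕ, (D1 n - x ^ 3 / 3 * g n))
      = (D1 0 - x ^ 3 / 3 * g 0) + ∑' n : ℕ, (D1 (n + 1) - x ^ 3 / 3 * g (n + 1)) :=
    Summable.tsum_eq_zero_add hsE
  have e6 : (∑' n : ℕ, (D1 (n + 1) - x ^ 3 / 3 * g (n + 1))) = x ^ 5 / 6 * ∑' n, c n := by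
    rw [tsum_congr hEsucc, tsum_mul_left]
  have eqA : 2 * (∑' n, F n) - x * (∑' n, g n) = x + ∑' n, D1 n := by
    rw [← e1, e2, e3, h20]
  have eqB : (∑' n, D1 n) - x ^ 3 / 3 * (∑' n, g n) = x ^ 5 / 6 * ∑' n, c n := by
    rw [← e4, e5, e6, hE0, zero_add]
  rw [hexp]
  linear_combination eqA + eqB
/-- The error function. -/
noncomputable def erf (x : ℝ) : ℝ :=
  (2 / Real.sqrt π) * ∫ t in (0:ℝ)..x, Real.exp (-t ^ 2)

/-- New series for the error function based on the first order spline approximation. -/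
theorem erf_series_order_one (x : ℝ) :
    Summable (fun k : ℕ =>
      (-1 : ℝ) ^ k * (2 * (k : ℝ) + 1) * (Nat.factorial (k + 1) : ℝ) * x ^ (2 * k) /
        ((2 * (k : ℝ) + 5) *
          ∏ r ∈ Finset.Icc 1 k, (∑ i ∈ Finset.Icc 1 r, (2 * (i : ℝ) + 1)))) ∧
    erf x = x / Real.sqrt π +
      (x / Real.sqrt π) * (1 + x ^ 2 / 3) * Real.exp (-x ^ 2) +
      (x ^ 5 / (6 * Real.sqrt π)) *
        ∑' k : ℕ,
          (-1 : ℝ) ^ k * (2 * (k : ℝ) + 1) * (Nat.factorial (k + 1) : ℝ) * x ^ (2 * k) /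
            ((2 * (k : ℝ) + 5) *
              ∏ r ∈ Finset.Icc 1 k, (∑ i ∈ Finset.Icc 1 r, (2 * (i : ℝ) + 1))) := by
  constructor
  · exact (erf_summable_c x).congr (fun k => (erf_term_eq x k).symm)
  · have htsum : (∑' k : ℕ,
        (-1 : ℝ) ^ k * (2 * (k : ℝ) + 1) * (Nat.factorial (k + 1) : ℝ) * x ^ (2 * k) /
          ((2 * (k : ℝ) + 5) *
            ∏ r ∈ Finset.Icc 1 k, (∑ i ∈ Finset.Icc 1 r, (2 * (i : ℝ) + 1))))
        = ∑' n : ℕ, 2 * (-1 : ℝ) ^ n * (2 * (n : ℝ) + 1) * ((n : ℝ) + 1) * x ^ (2 * n) /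
            ((2 * (n : ℝ) + 5) * ((n + 2).factorial : ℝ)) := tsum_congr (erf_term_eq x)
    rw [htsum, erf, erf_integral_series x, div_mul_eq_mul_div, erf_key x]
    have hs : Real.sqrt π ≠ 0 := (Real.sqrt_pos.mpr Real.pi_pos).ne'
    field_simp
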